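/- Let H be a real N×p matrix, y ∈ ℝ^N, and suppose the sequence (s^{(q)}) in ℝ^p is generated so that each s^{(q)} is r-sparse and each step uses a step size 0 < μ^{(q)} ≤ 1/ρ_H² with s^{(q+1)} = 𝒯_r(s^{(q)} + μ^{(q)} Hᵀ(y - H s^{(q)})). Then the sequence of residuals (‖y - H s^{(q)}‖₂²) is monotonically non-increasing and converges. -/

import Mathlib

open Matrix Finset Filter

/-- Squared Euclidean norm of a vector. -/
def sqNorm {n : Type*} [Fintype n] (v : n → ℝ) : ℝ := ∑ i, (v i)^2

/-- Spectral norm (largest singular value) of a real matrix,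
as the operator 2-norm of the associated Euclidean linear map. -/
noncomputable def specNorm {m n : Type*} [Fintype m] [Fintype n] [DecidableEq n]
    (H : Matrix m n ℝ) : ℝ :=
  ‖LinearMap.toContinuousLinearMap (Matrix.toEuclideanLin H)‖

/-- Number of nonzero entries (ℓ₀ "norm") of a vector. -/
noncomputable def l0 {n : Type*} [Fintype n] (v : n → ℝ) : ℕ :=
  (Set.toFinite (Function.support v)).toFinset.card

/-- `w` is a hard-thresholding of `v` at sparsity level `r`: `w` agrees with `v`
on a set `S` of `min r p` indices of largest magnitude and is zero elsewhere. -/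
def IsHardThreshold {n : Type*} [Fintype n] (r : ℕ) (v w : n → ℝ) : Prop :=
  ∃ S : Finset n, S.card = min r (Fintype.card n) ∧ (∀ i ∈ S, w i = v i) ∧
    (∀ i ∉ S, w i = 0) ∧ ∀ i ∈ S, ∀ j ∉ S, |v j| ≤ |v i|

lemma sqNorm_nonneg' {n : Type*} [Fintype n] (v : n → ℝ) : 0 ≤ sqNorm v :=
  Finset.sum_nonneg fun _ _ => sq_nonneg _

lemma sqNorm_sub_expand {n : Type*} [Fintype n] (a b : n → ℝ) :
    sqNorm (a - b) = sqNorm a - 2 * ∑ i, a i * b i + sqNorm b := by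
  simp only [sqNorm, Pi.sub_apply]
  have h : ∀ i : n, (a i - b i)^2 = a i ^2 - 2*(a i * b i) + b i ^2 := fun i => by ring
  simp_rw [h]
  rw [Finset.sum_add_distrib, Finset.sum_sub_distrib, Finset.mul_sum]

lemma sqNorm_smul {n : Type*} [Fintype n] (c : ℝ) (v : n → ℝ) :
    sqNorm (c • v) = c^2 * sqNorm v := by
  simp [sqNorm, mul_pow, Finset.mul_sum]

lemma sqNorm_eq_norm_sq {n : Type*} [Fintype n] (v : n → ℝ) :
    sqNorm v = ‖(WithLp.equiv 2 (n → ℝ)).symm v‖^2 := by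
  rw [EuclideanSpace.norm_eq, Real.sq_sqrt (by positivity)]
  simp [sqNorm, sq_abs]

lemma sqNorm_mulVec_le {N p : ℕ} (H : Matrix (Fin N) (Fin p) ℝ) (x : Fin p → ℝ) :
    sqNorm (H.mulVec x) ≤ (specNorm H)^2 * sqNorm x := by
  set T := LinearMap.toContinuousLinearMap (Matrix.toEuclideanLin H) with hT
  have h1 : ‖T ((WithLp.equiv 2 (Fin p → ℝ)).symm x)‖
      ≤ ‖T‖ * ‖(WithLp.equiv 2 (Fin p → ℝ)).symm x‖ := T.le_opNorm _
  have h2 : T ((WithLp.equiv 2 (Fin p → ℝ)).symm x)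
      = (WithLp.equiv 2 (Fin N → ℝ)).symm (H.mulVec x) := by
    simp [hT, Matrix.toEuclideanLin_toLp]
  rw [sqNorm_eq_norm_sq (H.mulVec x), sqNorm_eq_norm_sq x, specNorm, ← hT, ← h2]
  exact (pow_le_pow_left₀ (norm_nonneg _) h1 2).trans_eq (mul_pow _ _ 2)

lemma dot_transpose {N p : ℕ} (H : Matrix (Fin N) (Fin p) ℝ) (u : Fin N → ℝ) (d : Fin p → ℝ) :
    ∑ i, (H.transpose.mulVec u) i * d i = ∑ j, u j * (H.mulVec d) j := by
  simp only [Matrix.mulVec, dotProduct, Matrix.transpose_apply]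
  simp_rw [Finset.sum_mul, Finset.mul_sum]
  rw [Finset.sum_comm]
  exact Finset.sum_congr rfl fun j _ => Finset.sum_congr rfl fun i _ => by ring

lemma ht_sqNorm_le {n : Type*} [Fintype n] [DecidableEq n] {r : ℕ} {v w x : n → ℝ}
    (h : IsHardThreshold r v w) (hx : l0 x ≤ r) :
    sqNorm (v - w) ≤ sqNorm (v - x) := by
  obtain ⟨S, hScard, hwv, hw0, hmax⟩ := h
  set T : Finset n := (Set.toFinite (Function.support x)).toFinset with hTdef
  have hxT : ∀ i ∉ T, x i = 0 := by
    intro i hi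
    by_contra hxi
    exact hi (by simp [hTdef, Set.Finite.mem_toFinset, Function.mem_support, hxi])
  have hTcard : T.card ≤ r := hx
  have e1 : sqNorm (v - w) = ∑ i ∈ Sᶜ, (v i)^2 := by
    unfold sqNorm
    rw [← Finset.sum_compl_add_sum S]
    have h2 : ∑ i ∈ S, ((v - w) i)^2 = 0 :=
      Finset.sum_eq_zero fun i hi => by rw [Pi.sub_apply, hwv i hi]; ring
    have h1 : ∑ i ∈ Sᶜ, ((v - w) i)^2 = ∑ i ∈ Sᶜ, (v i)^2 :=
      Finset.sum_congr rfl fun i hi => by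
        rw [Pi.sub_apply, hw0 i (Finset.mem_compl.mp hi), sub_zero]
    rw [h1, h2, add_zero]
  have e2 : ∑ i ∈ Tᶜ, (v i)^2 ≤ sqNorm (v - x) := by
    unfold sqNorm
    rw [← Finset.sum_compl_add_sum T]
    have h1 : ∑ i ∈ Tᶜ, ((v - x) i)^2 = ∑ i ∈ Tᶜ, (v i)^2 :=
      Finset.sum_congr rfl fun i hi => by
        rw [Pi.sub_apply, hxT i (Finset.mem_compl.mp hi), sub_zero]
    have h2 : 0 ≤ ∑ i ∈ T, ((v - x) i)^2 := Finset.sum_nonneg fun _ _ => sq_nonneg _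
    linarith
  have cardkey : (T \ S).card ≤ (S \ T).card := by
    rcases le_or_gt r (Fintype.card n) with hrp | hrp
    · have hS : S.card = r := by rw [hScard, min_eq_left hrp]
      have c1 := Finset.card_sdiff_add_card_inter T S
      have c2 := Finset.card_sdiff_add_card_inter S T
      rw [Finset.inter_comm] at c1
      omega
    · have hSu : S = Finset.univ :=
        Finset.eq_univ_of_card S (by rw [hScard, min_eq_right hrp.le])
      have hTe : T \ Finset.univ = ∅ :=
        Finset.sdiff_eq_empty_iff_subset.mpr (Finset.subset_univ T)
      rw [hSu, hTe]
      simp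
  have key : ∑ i ∈ T \ S, (v i)^2 ≤ ∑ i ∈ S \ T, (v i)^2 := by
    rcases Finset.eq_empty_or_nonempty (S \ T) with hste | hste
    · have hc0 : (S \ T).card = 0 := by rw [hste]; rfl
      have hts : T \ S = ∅ := Finset.card_eq_zero.mp (by omega)
      simp [hts, hste]
    · obtain ⟨i₀, hi₀mem, hi₀min⟩ := Finset.exists_min_image (S \ T) (fun i => |v i|) hste
      have hsq : ∀ a b : ℝ, |a| ≤ |b| → a^2 ≤ b^2 := by
        intro a b hab
        have := pow_le_pow_left₀ (abs_nonneg a) hab 2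
        rwa [sq_abs, sq_abs] at this
      calc ∑ j ∈ T \ S, (v j)^2
          ≤ (T \ S).card • (v i₀)^2 := Finset.sum_le_card_nsmul _ _ _ (fun j hj =>
            hsq _ _ (hmax i₀ (Finset.mem_sdiff.mp hi₀mem).1 j (Finset.mem_sdiff.mp hj).2))
        _ ≤ (S \ T).card • (v i₀)^2 := by
            rw [nsmul_eq_mul, nsmul_eq_mul]
            exact mul_le_mul_of_nonneg_right (Nat.cast_le.mpr cardkey) (sq_nonneg _)
        _ ≤ ∑ i ∈ S \ T, (v i)^2 := Finset.card_nsmul_le_sum _ _ _ (fun i hi =>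
            hsq _ _ (hi₀min i hi))
  have hsplit : ∀ A : Finset n, ∑ i ∈ Aᶜ, (v i)^2 = (∑ i, (v i)^2) - ∑ i ∈ A, (v i)^2 := by
    intro A
    rw [← Finset.sum_compl_add_sum A (fun i => (v i)^2)]
    ring
  have hdecS : ∑ i ∈ S ∩ T, (v i)^2 + ∑ i ∈ S \ T, (v i)^2 = ∑ i ∈ S, (v i)^2 :=
    Finset.sum_inter_add_sum_sdiff S T _
  have hdecT : ∑ i ∈ T ∩ S, (v i)^2 + ∑ i ∈ T \ S, (v i)^2 = ∑ i ∈ T, (v i)^2 :=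
    Finset.sum_inter_add_sum_sdiff T S _
  rw [Finset.inter_comm] at hdecT
  rw [e1]
  rw [hsplit S]
  rw [hsplit T] at e2
  linarith

theorem stmt_14 {N p : ℕ} (H : Matrix (Fin N) (Fin p) ℝ) (y : Fin N → ℝ)
    (r : ℕ) (s : ℕ → (Fin p → ℝ)) (μ : ℕ → ℝ)
    (hsparse : ∀ q, l0 (s q) ≤ r)
    (hμ : ∀ q, 0 < μ q ∧ μ q ≤ 1 / (specNorm H)^2)
    (hstep : ∀ q, IsHardThreshold r
      (s q + μ q • H.transpose.mulVec (y - H.mulVec (s q))) (s (q+1))) :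
    Antitone (fun q => sqNorm (y - H.mulVec (s q))) ∧
    ∃ L : ℝ, Tendsto (fun q => sqNorm (y - H.mulVec (s q))) atTop (nhds L) := by
  have descent : ∀ q, sqNorm (y - H.mulVec (s (q+1))) ≤ sqNorm (y - H.mulVec (s q)) := by
    intro q
    obtain ⟨hμ0, hμ1⟩ := hμ q
    set g : Fin p → ℝ := H.transpose.mulVec (y - H.mulVec (s q)) with hg
    set Δ : Fin p → ℝ := s (q+1) - s q with hΔ
    set D : ℝ := ∑ i, g i * Δ i with hD
    -- threshold optimality
    have hA : sqNorm (s q + μ q • g - s (q+1)) ≤ sqNorm (s q + μ q • g - s q) :=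
      ht_sqNorm_le (hstep q) (hsparse q)
    -- key1 : sqNorm Δ ≤ 2 μ D
    have key1 : sqNorm Δ ≤ 2 * μ q * D := by
      have eL : s q + μ q • g - s (q+1) = μ q • g - Δ := by rw [hΔ]; abel
      have eR : s q + μ q • g - s q = μ q • g := by abel
      rw [eL, eR, sqNorm_sub_expand] at hA
      have esum : ∑ i, (μ q • g) i * Δ i = μ q * D := by
        rw [hD, Finset.mul_sum]
        exact Finset.sum_congr rfl fun i _ => by simp [mul_assoc]
      rw [esum, sqNorm_smul] at hA
      linarith
    -- key2 : expansion of the new residual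
    have key2 : sqNorm (y - H.mulVec (s (q+1)))
        = sqNorm (y - H.mulVec (s q)) - 2 * D + sqNorm (H.mulVec Δ) := by
      have e : y - H.mulVec (s (q+1)) = (y - H.mulVec (s q)) - H.mulVec Δ := by
        rw [hΔ, Matrix.mulVec_sub]; abel
      rw [e, sqNorm_sub_expand]
      have hdot : ∑ j, (y - H.mulVec (s q)) j * (H.mulVec Δ) j = D := by
        rw [hD, hg, dot_transpose]
      rw [hdot]
    -- spectral bound
    have hρ0 : (0:ℝ) ≤ specNorm H := norm_nonneg _
    have hρ : 0 < specNorm H := by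
      rcases hρ0.lt_or_eq with h | h
      · exact h
      · exfalso; rw [← h] at hμ1; simp at hμ1; linarith
    have hspec2 : (specNorm H)^2 ≤ 1 / μ q := by
      have h2 : 0 < (specNorm H)^2 := by positivity
      rw [le_div_iff₀ hμ0]
      rw [le_div_iff₀ h2] at hμ1
      linarith [mul_comm (μ q) ((specNorm H)^2)]
    have hb : sqNorm (H.mulVec Δ) ≤ (1 / μ q) * sqNorm Δ := by
      have h1 := sqNorm_mulVec_le H Δ
      have := sqNorm_nonneg' Δ
      nlinarith
    have h3 : (1 / μ q) * sqNorm Δ ≤ (1 / μ q) * (2 * μ q * D) :=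
      mul_le_mul_of_nonneg_left key1 (by positivity)
    have h4 : (1 / μ q) * (2 * μ q * D) = 2 * D := by field_simp
    linarith
  have hanti : Antitone (fun q => sqNorm (y - H.mulVec (s q))) :=
    antitone_nat_of_succ_le descent
  refine ⟨hanti, ?_⟩
  have hbdd : BddBelow (Set.range (fun q => sqNorm (y - H.mulVec (s q)))) := by
    refine ⟨0, ?_⟩
    rintro x ⟨q, rfl⟩
    exact sqNorm_nonneg' _
  exact ⟨_, tendsto_atTop_ciInf hanti hbdd⟩
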